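/- Let q ≥ 2 be even, let p_k ≥ 0 for k ∈ {−q/2, …, −1, 1, …, q/2} with ∑_k p_k = 1, and let W be the binary input symmetric q-ary output kernel with output alphabet K. Let X be a random variable with finitely many values, Y a random variable taking finitely many values in lists over {−1,+1}, and Y^(q) a random variable taking values in lists over K with |Y^(q)| = |Y| pointwise, such that P(Y^(q)=y′ | X=x, Y=y) = ∏_{i=1}^{|y|} W(y_i, y′_i) whenever P(X=x, Y=y) > 0 and |y′| = |y|. Then I(X; Y^(q)) ≥ I(X; Y) − E[|Y|] · [ H(p_{−q/2}, …, p_{−1}, p_1, …, p_{q/2}) + log₂( ∑_{k=1}^{q/2} (p_k + p_{−k})² ) ], where H(p_{−q/2}, …, p_{−1}, p_1, …, p_{q/2}) = −∑_k p_k log₂ p_k. -/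

import Mathlib

open scoped BigOperators
open Classical

noncomputable section

/-- A finite probability space: a probability mass function on a finite type. -/
structure FinProb (Ω : Type*) [Fintype Ω] where
  p : Ω → ℝ
  nonneg : ∀ ω, 0 ≤ p ω
  sum_one : ∑ ω, p ω = 1

variable {Ω : Type*} [Fintype Ω]

/-- Probability of an event. -/
def pr (μ : FinProb Ω) (E : Ω → Prop) : ℝ :=
  ∑ ω, if E ω then μ.p ω else 0

/-- Shannon entropy (base 2) of a random variable with finitely many values. -/
def entropy {S : Type*} (μ : FinProb Ω) (U : Ω → S) : ℝ :=
  -∑ u ∈ Finset.univ.image U,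
    pr μ (fun ω => U ω = u) * Real.logb 2 (pr μ (fun ω => U ω = u))

/-- Conditional Shannon entropy `H(U | V)`. -/
def condEntropy {S T : Type*} (μ : FinProb Ω) (U : Ω → S) (V : Ω → T) : ℝ :=
  ∑ v ∈ (Finset.univ.image V).filter (fun v => 0 < pr μ (fun ω => V ω = v)),
    pr μ (fun ω => V ω = v) *
      (-∑ u ∈ Finset.univ.image U,
        (pr μ (fun ω => U ω = u ∧ V ω = v) / pr μ (fun ω => V ω = v)) *
          Real.logb 2 (pr μ (fun ω => U ω = u ∧ V ω = v) / pr μ (fun ω => V ω = v)))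

/-- Mutual information `I(U;V) = H(U) - H(U|V)`. -/
def mutualInfo {S T : Type*} (μ : FinProb Ω) (U : Ω → S) (V : Ω → T) : ℝ :=
  entropy μ U - condEntropy μ U V

/-- Expected length of a list-valued random variable. -/
def expLen {A : Type*} (μ : FinProb Ω) (Y : Ω → List A) : ℝ :=
  ∑ ω, μ.p ω * (Y ω).length

/-- For even `q`, the output alphabet `K = {−q/2, …, −1, 1, …, q/2} ⊆ ℤ`. -/
def Keven (q : ℕ) : Finset ℤ :=
  (Finset.Icc (-((q / 2 : ℕ) : ℤ)) ((q / 2 : ℕ) : ℤ)).erase 0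

/-- The input alphabet `{−1, +1} ⊆ ℤ`. -/
def pmOne : Finset ℤ := {-1, 1}

section PrLemmas

lemma pr_nonneg' (μ : FinProb Ω) (E : Ω → Prop) : 0 ≤ pr μ E := by
  unfold pr
  apply Finset.sum_nonneg
  intro ω _
  by_cases h : E ω <;> simp [h, μ.nonneg ω]

lemma pr_mono' (μ : FinProb Ω) {E F : Ω → Prop} (h : ∀ ω, E ω → F ω) : pr μ E ≤ pr μ F := by
  unfold pr
  apply Finset.sum_le_sum
  intro ω _
  by_cases hE : E ω
  · simp [hE, h ω hE]
  · by_cases hF : F ω <;> simp [hE, hF, μ.nonneg ω]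

lemma pr_congr' (μ : FinProb Ω) {E F : Ω → Prop} (h : ∀ ω, E ω ↔ F ω) : pr μ E = pr μ F := by
  unfold pr
  simp only [h]

lemma le_pr_of_mem (μ : FinProb Ω) {E : Ω → Prop} {ω : Ω} (hω : E ω) : μ.p ω ≤ pr μ E := by
  unfold pr
  have := Finset.single_le_sum (f := fun ω' => if E ω' then μ.p ω' else 0)
    (fun i _ => by by_cases h : E i <;> simp [h, μ.nonneg i]) (Finset.mem_univ ω)
  simpa [hω] using this

lemma exists_pos_of_pr_pos {μ : FinProb Ω} {E : Ω → Prop} (h : 0 < pr μ E) :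
    ∃ ω, 0 < μ.p ω ∧ E ω := by
  by_contra hc
  push_neg at hc
  have hz : pr μ E = 0 := by
    unfold pr
    apply Finset.sum_eq_zero
    intro ω _
    by_cases hE : E ω
    · simp only [hE, if_true]
      by_contra hne
      exact hc ω (lt_of_le_of_ne (μ.nonneg ω) (Ne.symm hne)) hE
    · simp [hE]
  rw [hz] at h
  exact lt_irrefl 0 h

lemma pr_partition (μ : FinProb Ω) {T : Type*} (E : Ω → Prop) (V : Ω → T) :
    pr μ E = ∑ v ∈ Finset.univ.image V, pr μ (fun ω => E ω ∧ V ω = v) := by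
  unfold pr
  rw [Finset.sum_comm]
  refine Finset.sum_congr rfl fun ω _ => ?_
  by_cases h : E ω
  · simp only [h, true_and]
    rw [Finset.sum_ite_eq]
    rw [if_pos (Finset.mem_image_of_mem V (Finset.mem_univ ω))]
    simp
  · simp [h]

end PrLemmas

section Gibbs

lemma gibbs {ι : Type*} (t : Finset ι) (a b : ι → ℝ)
    (ha : ∀ i ∈ t, 0 ≤ a i) (hb : ∀ i ∈ t, 0 ≤ b i)
    (hab : ∀ i ∈ t, 0 < a i → 0 < b i)
    (hsum : ∑ i ∈ t, b i ≤ ∑ i ∈ t, a i) :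
    ∑ i ∈ t, a i * Real.logb 2 (b i) ≤ ∑ i ∈ t, a i * Real.logb 2 (a i) := by
  have key : ∑ i ∈ t, a i * Real.log (b i) ≤ ∑ i ∈ t, a i * Real.log (a i) := by
    have h1 : ∀ i ∈ t, a i * Real.log (b i) - a i * Real.log (a i) ≤ b i - a i := by
      intro i hi
      rcases (ha i hi).lt_or_eq with hpos | hzero
      · have hbpos := hab i hi hpos
        have hd : a i * Real.log (b i) - a i * Real.log (a i) = a i * Real.log (b i / a i) := by
          rw [Real.log_div (ne_of_gt hbpos) (ne_of_gt hpos)]; ring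
        rw [hd]
        have h2 : Real.log (b i / a i) ≤ b i / a i - 1 :=
          Real.log_le_sub_one_of_pos (div_pos hbpos hpos)
        have h3 : a i * Real.log (b i / a i) ≤ a i * (b i / a i - 1) :=
          mul_le_mul_of_nonneg_left h2 hpos.le
        have h4 : a i * (b i / a i - 1) = b i - a i := by
          field_simp
        linarith
      · rw [← hzero]
        simpa using hb i hi
    have h5 := Finset.sum_le_sum h1
    rw [Finset.sum_sub_distrib, Finset.sum_sub_distrib] at h5
    linarith
  have hlog2 : (0:ℝ) < Real.log 2 := Real.log_pos one_lt_two
  have hrw : ∀ c : ι → ℝ, ∑ i ∈ t, a i * Real.logb 2 (c i)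
      = (∑ i ∈ t, a i * Real.log (c i)) / Real.log 2 := by
    intro c
    rw [Finset.sum_div]
    refine Finset.sum_congr rfl fun i _ => ?_
    rw [Real.logb]
    ring
  rw [hrw a, hrw b]
  exact div_le_div_of_nonneg_right key hlog2.le

end Gibbs

section KevenLemmas

lemma mem_Keven {q : ℕ} {k : ℤ} :
    k ∈ Keven q ↔ k ≠ 0 ∧ -((q/2 : ℕ) : ℤ) ≤ k ∧ k ≤ ((q/2 : ℕ) : ℤ) := by
  simp [Keven, Finset.mem_erase, Finset.mem_Icc, and_assoc]

lemma neg_mem_Keven {q : ℕ} {k : ℤ} (h : k ∈ Keven q) : -k ∈ Keven q := by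
  rw [mem_Keven] at h ⊢
  omega

lemma mul_mem_Keven {q : ℕ} {k b : ℤ} (h : k ∈ Keven q) (hb : b = 1 ∨ b = -1) :
    k * b ∈ Keven q := by
  rcases hb with rfl | rfl
  · simpa using h
  · simpa using neg_mem_Keven h

lemma sum_Keven_neg {q : ℕ} (f : ℤ → ℝ) : ∑ k ∈ Keven q, f (-k) = ∑ k ∈ Keven q, f k := by
  refine Finset.sum_nbij' (fun k => -k) (fun k => -k) (fun k hk => neg_mem_Keven hk)
    (fun k hk => neg_mem_Keven hk) (fun k _ => neg_neg k) (fun k _ => neg_neg k)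
    (fun k _ => rfl)

lemma sum_Keven_split {q : ℕ} (hq2 : 2 ≤ q) (f : ℤ → ℝ) :
    ∑ k ∈ Keven q, f k = ∑ k ∈ Finset.Icc (1:ℤ) ((q/2 : ℕ) : ℤ), (f k + f (-k)) := by
  have hsplit : Keven q
      = Finset.Icc (-((q/2:ℕ):ℤ)) (-1) ∪ Finset.Icc (1:ℤ) ((q/2:ℕ):ℤ) := by
    ext k
    simp only [mem_Keven, Finset.mem_union, Finset.mem_Icc]
    omega
  have hdisj : Disjoint (Finset.Icc (-((q/2:ℕ):ℤ)) (-1)) (Finset.Icc (1:ℤ) ((q/2:ℕ):ℤ)) := by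
    rw [Finset.disjoint_left]
    intro k hk hk'
    simp only [Finset.mem_Icc] at hk hk'
    omega
  rw [hsplit, Finset.sum_union hdisj]
  have hneg : ∑ k ∈ Finset.Icc (-((q/2:ℕ):ℤ)) (-1), f k
      = ∑ k ∈ Finset.Icc (1:ℤ) ((q/2:ℕ):ℤ), f (-k) := by
    refine Finset.sum_nbij' (fun k => -k) (fun k => -k) ?_ ?_ (fun k _ => neg_neg k)
      (fun k _ => neg_neg k) (fun k _ => by rw [neg_neg])
    · intro k hk; simp only [Finset.mem_Icc] at hk ⊢; omega
    · intro k hk; simp only [Finset.mem_Icc] at hk ⊢; omega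
  rw [hneg, ← Finset.sum_add_distrib]
  exact Finset.sum_congr rfl fun k _ => add_comm _ _

lemma Icc_subset_Keven {q : ℕ} {k : ℤ} (h : k ∈ Finset.Icc (1:ℤ) ((q/2 : ℕ) : ℤ)) :
    k ∈ Keven q := by
  simp only [Finset.mem_Icc] at h
  rw [mem_Keven]
  omega

end KevenLemmas

section Channel

def rho (p : ℤ → ℝ) (b k : ℤ) : ℝ := p (k * b) / (p k + p (-k))

def cC (q : ℕ) (p : ℤ → ℝ) : ℝ :=
  (-∑ k ∈ Keven q, p k * Real.logb 2 (p k)) +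
    ∑ k ∈ Finset.Icc (1:ℤ) ((q/2 : ℕ) : ℤ), (p k + p (-k)) * Real.logb 2 (p k + p (-k))

lemma pm_cases (b : ↥pmOne) : (b : ℤ) = 1 ∨ (b : ℤ) = -1 := by
  have := b.2
  simp only [pmOne, Finset.mem_insert, Finset.mem_singleton] at this
  tauto

variable {q : ℕ} {p : ℤ → ℝ}

lemma sum_p_mul (hp1 : ∑ k ∈ Keven q, p k = 1) {b : ℤ} (hb : b = 1 ∨ b = -1) :
    ∑ k ∈ Keven q, p (k * b) = 1 := by
  rcases hb with rfl | rfl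
  · simpa using hp1
  · simp only [mul_neg_one]
    rw [sum_Keven_neg (fun k => p k)]
    exact hp1

lemma p_mul_le_s (hp0 : ∀ k ∈ Keven q, 0 ≤ p k) {k b : ℤ} (hk : k ∈ Keven q)
    (hb : b = 1 ∨ b = -1) : p (k * b) ≤ p k + p (-k) := by
  rcases hb with rfl | rfl
  · simp only [mul_one]
    linarith [hp0 (-k) (neg_mem_Keven hk)]
  · simp only [mul_neg_one]
    linarith [hp0 k hk]

lemma s_nonneg (hp0 : ∀ k ∈ Keven q, 0 ≤ p k) {k : ℤ} (hk : k ∈ Keven q) :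
    0 ≤ p k + p (-k) :=
  add_nonneg (hp0 k hk) (hp0 _ (neg_mem_Keven hk))

lemma rho_nonneg (hp0 : ∀ k ∈ Keven q, 0 ≤ p k) {k b : ℤ} (hk : k ∈ Keven q)
    (hb : b = 1 ∨ b = -1) : 0 ≤ rho p b k :=
  div_nonneg (hp0 _ (mul_mem_Keven hk hb)) (s_nonneg hp0 hk)

lemma rho_le_one (hp0 : ∀ k ∈ Keven q, 0 ≤ p k) {k b : ℤ} (hk : k ∈ Keven q)
    (hb : b = 1 ∨ b = -1) : rho p b k ≤ 1 := by
  unfold rho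
  rcases (s_nonneg hp0 hk).lt_or_eq with hpos | h0
  · exact div_le_one_of_le₀ (p_mul_le_s hp0 hk hb) hpos.le
  · rw [← h0]
    simp

lemma rho_pos (hp0 : ∀ k ∈ Keven q, 0 ≤ p k) {k b : ℤ} (hk : k ∈ Keven q)
    (hb : b = 1 ∨ b = -1) (hpp : 0 < p (k * b)) : 0 < rho p b k :=
  div_pos hpp (lt_of_lt_of_le hpp (p_mul_le_s hp0 hk hb))

lemma e_eq (hq2 : 2 ≤ q) (hp0 : ∀ k ∈ Keven q, 0 ≤ p k) {b : ℤ} (hb : b = 1 ∨ b = -1) :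
    ∑ k ∈ Keven q, p (k * b) * (-Real.logb 2 (rho p b k)) = cC q p := by
  have step1 : ∀ k ∈ Keven q, p (k * b) * (-Real.logb 2 (rho p b k)) =
      p (k * b) * Real.logb 2 (p k + p (-k)) - p (k * b) * Real.logb 2 (p (k * b)) := by
    intro k hk
    rcases (hp0 _ (mul_mem_Keven hk hb)).lt_or_eq with hpos | h0
    · have hs : 0 < p k + p (-k) := lt_of_lt_of_le hpos (p_mul_le_s hp0 hk hb)
      unfold rho
      rw [Real.logb_div (ne_of_gt hpos) (ne_of_gt hs)]
      ring
    · rw [← h0]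
      ring
  rw [Finset.sum_congr rfl step1, Finset.sum_sub_distrib]
  have h2 : ∑ k ∈ Keven q, p (k * b) * Real.logb 2 (p (k * b))
      = ∑ k ∈ Keven q, p k * Real.logb 2 (p k) := by
    rcases hb with rfl | rfl
    · simp
    · simp only [mul_neg_one]
      exact sum_Keven_neg (fun k => p k * Real.logb 2 (p k))
  have h3 : ∑ k ∈ Keven q, p (k * b) * Real.logb 2 (p k + p (-k))
      = ∑ k ∈ Finset.Icc (1:ℤ) ((q/2 : ℕ) : ℤ), (p k + p (-k)) * Real.logb 2 (p k + p (-k)) := by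
    have hsym : ∑ k ∈ Keven q, p (k * b) * Real.logb 2 (p k + p (-k))
        = ∑ k ∈ Keven q, p k * Real.logb 2 (p k + p (-k)) := by
      rcases hb with rfl | rfl
      · simp
      · simp only [mul_neg_one]
        have : ∀ k ∈ Keven q, p (-k) * Real.logb 2 (p k + p (-k))
            = (fun j => p j * Real.logb 2 (p j + p (-j))) (-k) := by
          intro k _
          simp only [neg_neg]
          rw [add_comm (p (-k))]
        rw [Finset.sum_congr rfl this, sum_Keven_neg (fun j => p j * Real.logb 2 (p j + p (-j)))]
    rw [hsym, sum_Keven_split hq2 (fun k => p k * Real.logb 2 (p k + p (-k)))]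
    refine Finset.sum_congr rfl fun k _ => ?_
    simp only [neg_neg]
    rw [add_comm (p (-k)) (p k)]
    ring
  rw [h2, h3]
  unfold cC
  ring

end Channel

section PiProd

lemma sum_pi_prod {n : ℕ} {α : Type*} [Fintype α] (g : Fin n → α → ℝ) :
    ∑ z : Fin n → α, ∏ i, g i (z i) = ∏ i, ∑ x : α, g i x := by
  rw [Finset.prod_univ_sum, Fintype.piFinset_univ]

end PiProd

section SumG

variable {q : ℕ} {p : ℤ → ℝ}

lemma sum_g (hq2 : 2 ≤ q) (hp0 : ∀ k ∈ Keven q, 0 ≤ p k) (hp1 : ∑ k ∈ Keven q, p k = 1)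
    {n : ℕ} (a : Fin n → ↥pmOne) :
    ∑ z : Fin n → ↥(Keven q),
      (∏ i, p ((z i : ℤ) * (a i : ℤ))) *
        (-Real.logb 2 (∏ i, rho p ((a i : ℤ)) ((z i : ℤ))))
    = (n : ℝ) * cC q p := by
  have hterm : ∀ z : Fin n → ↥(Keven q),
      (∏ i, p ((z i : ℤ) * (a i : ℤ))) *
        (-Real.logb 2 (∏ i, rho p ((a i : ℤ)) ((z i : ℤ))))
      = ∑ i, (∏ j, p ((z j : ℤ) * (a j : ℤ))) * (-Real.logb 2 (rho p ((a i : ℤ)) ((z i : ℤ)))) := by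
    intro z
    by_cases hz : ∏ i, p ((z i : ℤ) * (a i : ℤ)) = 0
    · rw [hz]
      simp
    · have hne : ∀ i : Fin n, p ((z i : ℤ) * (a i : ℤ)) ≠ 0 := by
        intro i hcontra
        exact hz (Finset.prod_eq_zero (Finset.mem_univ i) hcontra)
      have hrho : ∀ i : Fin n, rho p ((a i : ℤ)) ((z i : ℤ)) ≠ 0 := by
        intro i
        refine ne_of_gt (rho_pos hp0 (z i).2 (pm_cases (a i)) ?_)
        exact lt_of_le_of_ne (hp0 _ (mul_mem_Keven (z i).2 (pm_cases (a i)))) (Ne.symm (hne i))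
      rw [Real.logb_prod _ _ (fun i _ => hrho i)]
      rw [← Finset.sum_neg_distrib, Finset.mul_sum]
  rw [Finset.sum_congr rfl (fun z _ => hterm z), Finset.sum_comm]
  have hi : ∀ i : Fin n,
      ∑ z : Fin n → ↥(Keven q), (∏ j, p ((z j : ℤ) * (a j : ℤ))) *
        (-Real.logb 2 (rho p ((a i : ℤ)) ((z i : ℤ)))) = cC q p := by
    intro i
    have hfac : ∀ z : Fin n → ↥(Keven q),
        (∏ j, p ((z j : ℤ) * (a j : ℤ))) * (-Real.logb 2 (rho p ((a i : ℤ)) ((z i : ℤ))))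
        = ∏ j, (p ((z j : ℤ) * (a j : ℤ)) *
            (if j = i then -Real.logb 2 (rho p ((a j : ℤ)) ((z j : ℤ))) else 1)) := by
      intro z
      rw [Finset.prod_mul_distrib,
        Finset.prod_ite_eq' Finset.univ i (fun j => -Real.logb 2 (rho p ((a j : ℤ)) ((z j : ℤ))))]
      simp
    rw [Finset.sum_congr rfl (fun z _ => hfac z),
      sum_pi_prod (fun (j : Fin n) (x : ↥(Keven q)) => p ((x : ℤ) * (a j : ℤ)) *
        (if j = i then -Real.logb 2 (rho p ((a j : ℤ)) ((x : ℤ))) else 1))]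
    have hj : ∀ j : Fin n,
        (∑ x : ↥(Keven q), p ((x : ℤ) * (a j : ℤ)) *
          (if j = i then -Real.logb 2 (rho p ((a j : ℤ)) ((x : ℤ))) else 1))
        = if j = i then cC q p else 1 := by
      intro j
      by_cases hji : j = i
      · subst hji
        simp only [eq_self_iff_true, if_true]
        rw [Finset.sum_coe_sort (Keven q)
          (fun k => p (k * (a j : ℤ)) * (-Real.logb 2 (rho p ((a j : ℤ)) k)))]
        exact e_eq hq2 hp0 (pm_cases (a j))
      · simp only [if_neg hji, mul_one]
        rw [Finset.sum_coe_sort (Keven q) (fun k => p (k * (a j : ℤ)))]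
        exact sum_p_mul hp1 (pm_cases (a j))
    rw [Finset.prod_congr rfl (fun j _ => hj j),
      Finset.prod_ite_eq' Finset.univ i (fun _ => cC q p)]
    simp
  rw [Finset.sum_congr rfl (fun i _ => hi i)]
  simp [Finset.sum_const, Finset.card_univ, nsmul_eq_mul]

end SumG


section Lists

lemma zipWith_ofFn' {α β γ : Type*} : ∀ {n : ℕ} (f : α → β → γ) (a : Fin n → α) (b : Fin n → β),
    List.zipWith f (List.ofFn a) (List.ofFn b) = List.ofFn (fun i => f (a i) (b i))
  | 0, f, a, b => by simp
  | (m+1), f, a, b => by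
      rw [List.ofFn_succ, List.ofFn_succ, List.zipWith_cons_cons, zipWith_ofFn' f _ _,
        List.ofFn_succ]

def toFn {α : Type*} (d : α) (n : ℕ) (l : List α) : Fin n → α := fun i => l.getD i d

lemma ofFn_toFn {α : Type*} (d : α) {n : ℕ} {l : List α} (h : l.length = n) :
    List.ofFn (toFn d n l) = l := by
  apply List.ext_getElem (by simp [h])
  intro i h1 h2
  simp only [List.getElem_ofFn, toFn]
  exact List.getD_eq_getElem l d h2

end Lists

section RlDef

def Rl (q : ℕ) (p : ℤ → ℝ) (y : List ↥pmOne) (y' : List ↥(Keven q)) : ℝ :=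
  if y.length = y'.length then
    (List.zipWith (fun (b : ↥pmOne) (k : ↥(Keven q)) => rho p (b : ℤ) (k : ℤ)) y y').prod
  else 0

variable {q : ℕ} {p : ℤ → ℝ}

lemma Rl_ofFn {n : ℕ} (a : Fin n → ↥pmOne) (b : Fin n → ↥(Keven q)) :
    Rl q p (List.ofFn a) (List.ofFn b) = ∏ i, rho p ((a i : ℤ)) ((b i : ℤ)) := by
  unfold Rl
  rw [if_pos (by simp), zipWith_ofFn', List.prod_ofFn]

lemma sum_Rl_le_one (hq2 : 2 ≤ q) (hp0 : ∀ k ∈ Keven q, 0 ≤ p k)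
    (dK : ↥(Keven q)) (dPM : ↥pmOne)
    (t : Finset (List ↥pmOne)) (y' : List ↥(Keven q)) :
    ∑ y ∈ t, Rl q p y y' ≤ 1 := by
  classical
  set n := y'.length with hn
  have h1 : ∑ y ∈ t.filter (fun y => y.length = n), Rl q p y y' = ∑ y ∈ t, Rl q p y y' := by
    apply Finset.sum_filter_of_ne
    intro y _ hne
    by_contra hlen
    exact hne (by unfold Rl; rw [if_neg hlen])
  rw [← h1]
  have hby' : List.ofFn (toFn dK n y') = y' := ofFn_toFn dK rfl
  have h2 : ∀ y ∈ t.filter (fun y => y.length = n),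
      Rl q p y y' = ∏ i, rho p (toFn dPM n y i).val (toFn dK n y' i).val := by
    intro y hy
    have hl : y.length = n := (Finset.mem_filter.mp hy).2
    conv_lhs => rw [← ofFn_toFn dPM hl, ← hby']
    rw [Rl_ofFn]
  rw [Finset.sum_congr rfl h2]
  have hinj : ∀ y1 ∈ t.filter (fun y => y.length = n), ∀ y2 ∈ t.filter (fun y => y.length = n),
      toFn dPM n y1 = toFn dPM n y2 → y1 = y2 := by
    intro y1 h1' y2 h2' he
    rw [← ofFn_toFn dPM (Finset.mem_filter.mp h1').2, ← ofFn_toFn dPM (Finset.mem_filter.mp h2').2,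
      he]
  rw [← Finset.sum_image (f := fun w : Fin n → ↥pmOne => ∏ i, rho p (w i).val (toFn dK n y' i).val) hinj]
  have hnonneg : ∀ w : Fin n → ↥pmOne, 0 ≤ ∏ i, rho p ((w i : ℤ)) (toFn dK n y' i).val := by
    intro w
    exact Finset.prod_nonneg fun i _ => rho_nonneg hp0 (toFn dK n y' i).2 (pm_cases (w i))
  have hle := Finset.sum_le_sum_of_subset_of_nonneg
    (Finset.subset_univ ((t.filter (fun y => y.length = n)).image (toFn dPM n)))
    (fun w _ _ => hnonneg w)
  refine le_trans hle ?_
  rw [sum_pi_prod (fun (i : Fin n) (x : ↥pmOne) => rho p ((x : ℤ)) ((toFn dK n y' i).val))]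
  apply Finset.prod_le_one
  · intro i _
    exact Finset.sum_nonneg fun x _ => rho_nonneg hp0 (toFn dK n y' i).2 (pm_cases x)
  · intro i _
    rw [Finset.sum_coe_sort pmOne (fun b => rho p b ((toFn dK n y' i).val))]
    have hpm : (pmOne : Finset ℤ) = {-1, 1} := rfl
    rw [hpm, Finset.sum_pair (by norm_num : (-1 : ℤ) ≠ 1)]
    set k : ℤ := (toFn dK n y' i).val with hk
    have hkm : k ∈ Keven q := (toFn dK n y' i).2
    unfold rho
    rw [← add_div]
    simp only [mul_neg_one, mul_one]
    rcases (s_nonneg hp0 hkm).lt_or_eq with hpos | h0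
    · rw [add_comm (p (-k)) (p k)]
      exact div_le_one_of_le₀ le_rfl hpos.le
    · rw [← h0]
      simp

end RlDef



section CondGibbs

variable {S TY TV : Type*}

lemma condEntropy_eq (μ : FinProb Ω) (X : Ω → S) (Y : Ω → TY) :
    condEntropy μ X Y = -∑ x ∈ Finset.univ.image X, ∑ y ∈ Finset.univ.image Y,
      pr μ (fun ω => X ω = x ∧ Y ω = y) *
        Real.logb 2 (pr μ (fun ω => X ω = x ∧ Y ω = y) / pr μ (fun ω => Y ω = y)) := by
  unfold condEntropy
  have step1 : ∀ y ∈ (Finset.univ.image Y).filter (fun y => 0 < pr μ (fun ω => Y ω = y)),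
      pr μ (fun ω => Y ω = y) *
        (-∑ x ∈ Finset.univ.image X,
          (pr μ (fun ω => X ω = x ∧ Y ω = y) / pr μ (fun ω => Y ω = y)) *
            Real.logb 2 (pr μ (fun ω => X ω = x ∧ Y ω = y) / pr μ (fun ω => Y ω = y)))
      = -∑ x ∈ Finset.univ.image X, pr μ (fun ω => X ω = x ∧ Y ω = y) *
          Real.logb 2 (pr μ (fun ω => X ω = x ∧ Y ω = y) / pr μ (fun ω => Y ω = y)) := by
    intro y hy
    have hPY : 0 < pr μ (fun ω => Y ω = y) := (Finset.mem_filter.mp hy).2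
    rw [mul_neg]
    congr 1
    rw [Finset.mul_sum]
    refine Finset.sum_congr rfl fun x _ => ?_
    have : pr μ (fun ω => Y ω = y) *
        (pr μ (fun ω => X ω = x ∧ Y ω = y) / pr μ (fun ω => Y ω = y))
        = pr μ (fun ω => X ω = x ∧ Y ω = y) := by
      field_simp
    rw [← mul_assoc, this]
  rw [Finset.sum_congr rfl step1]
  rw [Finset.sum_subset (Finset.filter_subset _ _) ?hz]
  case hz =>
    intro y _ hy
    have hPY0 : pr μ (fun ω => Y ω = y) = 0 := by
      have : ¬ 0 < pr μ (fun ω => Y ω = y) := by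
        intro hpos
        exact hy (Finset.mem_filter.mpr ⟨‹y ∈ Finset.univ.image Y›, hpos⟩)
      exact le_antisymm (not_lt.mp this) (pr_nonneg' μ _)
    have : ∀ x ∈ Finset.univ.image X, pr μ (fun ω => X ω = x ∧ Y ω = y) *
        Real.logb 2 (pr μ (fun ω => X ω = x ∧ Y ω = y) / pr μ (fun ω => Y ω = y)) = 0 := by
      intro x _
      have h0 : pr μ (fun ω => X ω = x ∧ Y ω = y) = 0 :=
        le_antisymm (le_trans (pr_mono' μ fun ω h => h.2) hPY0.le) (pr_nonneg' μ _)
      rw [h0, zero_mul]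
    rw [Finset.sum_congr rfl this, Finset.sum_const_zero, neg_zero]
  rw [Finset.sum_neg_distrib]
  exact congrArg Neg.neg Finset.sum_comm

lemma cond_gibbs (μ : FinProb Ω) (X : Ω → S) (Y : Ω → TY) (V : Ω → TV) (G : TY → TV → ℝ)
    (hG0 : ∀ y v, 0 ≤ G y v)
    (hGsum : ∀ v, ∑ y ∈ Finset.univ.image Y, G y v ≤ 1)
    (hGpos : ∀ x y v, 0 < pr μ (fun ω => X ω = x ∧ Y ω = y ∧ V ω = v) → 0 < G y v) :
    condEntropy μ X V ≤ condEntropy μ X Y +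
      ∑ x ∈ Finset.univ.image X, ∑ y ∈ Finset.univ.image Y,
        ∑ v ∈ (Finset.univ.image V).filter (fun v => 0 < pr μ (fun ω => V ω = v)),
          pr μ (fun ω => X ω = x ∧ Y ω = y ∧ V ω = v) * (-Real.logb 2 (G y v)) := by
  classical
  have hPXVsplit : ∀ (x : S) (v : TV), pr μ (fun ω => X ω = x ∧ V ω = v)
      = ∑ y ∈ Finset.univ.image Y, pr μ (fun ω => X ω = x ∧ Y ω = y ∧ V ω = v) := by
    intro x v
    rw [pr_partition μ (fun ω => X ω = x ∧ V ω = v) Y]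
    exact Finset.sum_congr rfl fun y _ => pr_congr' μ (fun ω => by tauto)
  have hPVsplit : ∀ v : TV, pr μ (fun ω => V ω = v)
      = ∑ x ∈ Finset.univ.image X, pr μ (fun ω => X ω = x ∧ V ω = v) := by
    intro v
    rw [pr_partition μ (fun ω => V ω = v) X]
    exact Finset.sum_congr rfl fun x _ => pr_congr' μ (fun ω => by tauto)
  have hPYsplit : ∀ y : TY, pr μ (fun ω => Y ω = y)
      = ∑ x ∈ Finset.univ.image X, pr μ (fun ω => X ω = x ∧ Y ω = y) := by
    intro y
    rw [pr_partition μ (fun ω => Y ω = y) X]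
    exact Finset.sum_congr rfl fun x _ => pr_congr' μ (fun ω => by tauto)
  have hPXYsplit : ∀ (x : S) (y : TY), pr μ (fun ω => X ω = x ∧ Y ω = y)
      = ∑ v ∈ (Finset.univ.image V).filter (fun v => 0 < pr μ (fun ω => V ω = v)),
          pr μ (fun ω => X ω = x ∧ Y ω = y ∧ V ω = v) := by
    intro x y
    have hz : ∀ v ∈ Finset.univ.image V,
        v ∉ (Finset.univ.image V).filter (fun v => 0 < pr μ (fun ω => V ω = v)) →
        pr μ (fun ω => X ω = x ∧ Y ω = y ∧ V ω = v) = 0 := by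
      intro v hv hnv
      have hv0 : pr μ (fun ω => V ω = v) = 0 := by
        have hnp : ¬ 0 < pr μ (fun ω => V ω = v) := fun hpos =>
          hnv (Finset.mem_filter.mpr ⟨hv, hpos⟩)
        exact le_antisymm (not_lt.mp hnp) (pr_nonneg' μ _)
      exact le_antisymm (le_trans (pr_mono' μ fun ω h => h.2.2) hv0.le) (pr_nonneg' μ _)
    have hre : ∀ v ∈ Finset.univ.image V,
        pr μ (fun ω => (X ω = x ∧ Y ω = y) ∧ V ω = v)
          = pr μ (fun ω => X ω = x ∧ Y ω = y ∧ V ω = v) :=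
      fun v _ => pr_congr' μ (fun ω => by tauto)
    rw [pr_partition μ (fun ω => X ω = x ∧ Y ω = y) V, Finset.sum_congr rfl hre,
      ← Finset.sum_subset (Finset.filter_subset _ _) hz]
  calc condEntropy μ X V
      ≤ ∑ v ∈ (Finset.univ.image V).filter (fun v => 0 < pr μ (fun ω => V ω = v)),
          pr μ (fun ω => V ω = v) *
          (-∑ x ∈ Finset.univ.image X,
            (pr μ (fun ω => X ω = x ∧ V ω = v) / pr μ (fun ω => V ω = v)) *
              Real.logb 2 (∑ y ∈ Finset.univ.image Y,
                pr μ (fun ω => X ω = x ∧ Y ω = y) / pr μ (fun ω => Y ω = y) * G y v)) := by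
        unfold condEntropy
        apply Finset.sum_le_sum
        intro v hv
        have hPV : 0 < pr μ (fun ω => V ω = v) := (Finset.mem_filter.mp hv).2
        refine mul_le_mul_of_nonneg_left ?_ hPV.le
        apply neg_le_neg
        refine gibbs (Finset.univ.image X)
          (fun x => pr μ (fun ω => X ω = x ∧ V ω = v) / pr μ (fun ω => V ω = v))
          (fun x => ∑ y ∈ Finset.univ.image Y,
            pr μ (fun ω => X ω = x ∧ Y ω = y) / pr μ (fun ω => Y ω = y) * G y v)
          ?_ ?_ ?_ ?_
        · intro x _
          exact div_nonneg (pr_nonneg' μ _) hPV.le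
        · intro x _
          exact Finset.sum_nonneg fun y _ =>
            mul_nonneg (div_nonneg (pr_nonneg' μ _) (pr_nonneg' μ _)) (hG0 y v)
        · intro x _ hx
          have hPXV : 0 < pr μ (fun ω => X ω = x ∧ V ω = v) := by
            by_contra h
            push_neg at h
            have h0 : pr μ (fun ω => X ω = x ∧ V ω = v) = 0 :=
              le_antisymm h (pr_nonneg' μ _)
            rw [h0, zero_div] at hx
            exact lt_irrefl 0 hx
          have hex : ∃ y ∈ Finset.univ.image Y,
              0 < pr μ (fun ω => X ω = x ∧ Y ω = y ∧ V ω = v) := by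
            by_contra hall
            push_neg at hall
            have h0 : pr μ (fun ω => X ω = x ∧ V ω = v) = 0 := by
              rw [hPXVsplit x v]
              apply Finset.sum_eq_zero
              intro y hy
              exact le_antisymm (hall y hy) (pr_nonneg' μ _)
            rw [h0] at hPXV
            exact lt_irrefl 0 hPXV
          obtain ⟨y, hyFY, hPJ⟩ := hex
          have hG := hGpos x y v hPJ
          have hPXY : 0 < pr μ (fun ω => X ω = x ∧ Y ω = y) :=
            lt_of_lt_of_le hPJ (pr_mono' μ fun ω h => ⟨h.1, h.2.1⟩)
          have hPY : 0 < pr μ (fun ω => Y ω = y) :=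
            lt_of_lt_of_le hPXY (pr_mono' μ fun ω h => h.2)
          have hterm : 0 < pr μ (fun ω => X ω = x ∧ Y ω = y) / pr μ (fun ω => Y ω = y) * G y v :=
            mul_pos (div_pos hPXY hPY) hG
          refine lt_of_lt_of_le hterm
            (Finset.single_le_sum (f := fun y' =>
              pr μ (fun ω => X ω = x ∧ Y ω = y') / pr μ (fun ω => Y ω = y') * G y' v)
              (fun y' _ => mul_nonneg (div_nonneg (pr_nonneg' μ _) (pr_nonneg' μ _)) (hG0 y' v))
              hyFY)
        · have hsa : ∑ x ∈ Finset.univ.image X,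
              pr μ (fun ω => X ω = x ∧ V ω = v) / pr μ (fun ω => V ω = v) = 1 := by
            rw [← Finset.sum_div, ← hPVsplit v, div_self (ne_of_gt hPV)]
          rw [hsa]
          calc ∑ x ∈ Finset.univ.image X, ∑ y ∈ Finset.univ.image Y,
                pr μ (fun ω => X ω = x ∧ Y ω = y) / pr μ (fun ω => Y ω = y) * G y v
              = ∑ y ∈ Finset.univ.image Y, (∑ x ∈ Finset.univ.image X,
                  pr μ (fun ω => X ω = x ∧ Y ω = y) / pr μ (fun ω => Y ω = y)) * G y v := by
                rw [Finset.sum_comm]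
                exact Finset.sum_congr rfl fun y _ => (Finset.sum_mul _ _ _).symm
            _ ≤ ∑ y ∈ Finset.univ.image Y, G y v := by
                apply Finset.sum_le_sum
                intro y _
                rcases (pr_nonneg' μ (fun ω => Y ω = y)).lt_or_eq with hPY | hPY0
                · have hone : ∑ x ∈ Finset.univ.image X,
                      pr μ (fun ω => X ω = x ∧ Y ω = y) / pr μ (fun ω => Y ω = y) = 1 := by
                    rw [← Finset.sum_div, ← hPYsplit y, div_self (ne_of_gt hPY)]
                  rw [hone, one_mul]
                · have hall : ∀ x ∈ Finset.univ.image X,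
                      pr μ (fun ω => X ω = x ∧ Y ω = y) / pr μ (fun ω => Y ω = y) = 0 := by
                    intro x _
                    have h0 : pr μ (fun ω => X ω = x ∧ Y ω = y) = 0 :=
                      le_antisymm (le_trans (pr_mono' μ fun ω h => h.2) hPY0.symm.le)
                        (pr_nonneg' μ _)
                    rw [h0, zero_div]
                  rw [Finset.sum_congr rfl hall, Finset.sum_const_zero, zero_mul]
                  exact hG0 y v
            _ ≤ 1 := hGsum v
    _ = -∑ v ∈ (Finset.univ.image V).filter (fun v => 0 < pr μ (fun ω => V ω = v)),
          ∑ x ∈ Finset.univ.image X,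
            pr μ (fun ω => X ω = x ∧ V ω = v) *
              Real.logb 2 (∑ y ∈ Finset.univ.image Y,
                pr μ (fun ω => X ω = x ∧ Y ω = y) / pr μ (fun ω => Y ω = y) * G y v) := by
        rw [← Finset.sum_neg_distrib]
        apply Finset.sum_congr rfl
        intro v hv
        have hPV : 0 < pr μ (fun ω => V ω = v) := (Finset.mem_filter.mp hv).2
        rw [mul_neg]
        congr 1
        rw [Finset.mul_sum]
        refine Finset.sum_congr rfl fun x _ => ?_
        have hc : pr μ (fun ω => V ω = v) *
            (pr μ (fun ω => X ω = x ∧ V ω = v) / pr μ (fun ω => V ω = v))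
            = pr μ (fun ω => X ω = x ∧ V ω = v) := by
          field_simp
        rw [← mul_assoc, hc]
    _ ≤ -∑ v ∈ (Finset.univ.image V).filter (fun v => 0 < pr μ (fun ω => V ω = v)),
          ∑ x ∈ Finset.univ.image X, ∑ y ∈ Finset.univ.image Y,
            pr μ (fun ω => X ω = x ∧ Y ω = y ∧ V ω = v) *
              (Real.logb 2 (pr μ (fun ω => X ω = x ∧ Y ω = y) / pr μ (fun ω => Y ω = y)) +
                Real.logb 2 (G y v)) := by
        apply neg_le_neg
        apply Finset.sum_le_sum
        intro v hv
        apply Finset.sum_le_sum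
        intro x _
        rw [hPXVsplit x v, Finset.sum_mul]
        apply Finset.sum_le_sum
        intro y hyFY
        rcases (pr_nonneg' μ (fun ω => X ω = x ∧ Y ω = y ∧ V ω = v)).lt_or_eq with hPJ | hPJ0
        · have hG := hGpos x y v hPJ
          have hPXY : 0 < pr μ (fun ω => X ω = x ∧ Y ω = y) :=
            lt_of_lt_of_le hPJ (pr_mono' μ fun ω h => ⟨h.1, h.2.1⟩)
          have hPY : 0 < pr μ (fun ω => Y ω = y) :=
            lt_of_lt_of_le hPXY (pr_mono' μ fun ω h => h.2)
          have hmulpos : 0 < pr μ (fun ω => X ω = x ∧ Y ω = y) / pr μ (fun ω => Y ω = y) * G y v :=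
            mul_pos (div_pos hPXY hPY) hG
          have hle : pr μ (fun ω => X ω = x ∧ Y ω = y) / pr μ (fun ω => Y ω = y) * G y v
              ≤ ∑ y' ∈ Finset.univ.image Y,
                pr μ (fun ω => X ω = x ∧ Y ω = y') / pr μ (fun ω => Y ω = y') * G y' v := by
            exact Finset.single_le_sum (f := fun y' =>
              pr μ (fun ω => X ω = x ∧ Y ω = y') / pr μ (fun ω => Y ω = y') * G y' v)
              (fun y' _ => mul_nonneg (div_nonneg (pr_nonneg' μ _) (pr_nonneg' μ _)) (hG0 y' v))
              hyFY
          have hlog : Real.logb 2 (pr μ (fun ω => X ω = x ∧ Y ω = y) / pr μ (fun ω => Y ω = y)) +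
              Real.logb 2 (G y v)
              ≤ Real.logb 2 (∑ y' ∈ Finset.univ.image Y,
                  pr μ (fun ω => X ω = x ∧ Y ω = y') / pr μ (fun ω => Y ω = y') * G y' v) := by
            rw [← Real.logb_mul (ne_of_gt (div_pos hPXY hPY)) (ne_of_gt hG)]
            exact Real.logb_le_logb_of_le one_lt_two hmulpos hle
          exact mul_le_mul_of_nonneg_left hlog hPJ.le
        · rw [← hPJ0]
          simp
    _ = condEntropy μ X Y +
          ∑ x ∈ Finset.univ.image X, ∑ y ∈ Finset.univ.image Y,
            ∑ v ∈ (Finset.univ.image V).filter (fun v => 0 < pr μ (fun ω => V ω = v)),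
              pr μ (fun ω => X ω = x ∧ Y ω = y ∧ V ω = v) * (-Real.logb 2 (G y v)) := by
        have h1 : ∀ v ∈ (Finset.univ.image V).filter (fun v => 0 < pr μ (fun ω => V ω = v)),
            ∑ x ∈ Finset.univ.image X, ∑ y ∈ Finset.univ.image Y,
              pr μ (fun ω => X ω = x ∧ Y ω = y ∧ V ω = v) *
                (Real.logb 2 (pr μ (fun ω => X ω = x ∧ Y ω = y) / pr μ (fun ω => Y ω = y)) +
                  Real.logb 2 (G y v))
            = (∑ x ∈ Finset.univ.image X, ∑ y ∈ Finset.univ.image Y,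
                pr μ (fun ω => X ω = x ∧ Y ω = y ∧ V ω = v) *
                  Real.logb 2 (pr μ (fun ω => X ω = x ∧ Y ω = y) / pr μ (fun ω => Y ω = y)))
              + ∑ x ∈ Finset.univ.image X, ∑ y ∈ Finset.univ.image Y,
                pr μ (fun ω => X ω = x ∧ Y ω = y ∧ V ω = v) * Real.logb 2 (G y v) := by
          intro v _
          rw [← Finset.sum_add_distrib]
          refine Finset.sum_congr rfl fun x _ => ?_
          rw [← Finset.sum_add_distrib]
          exact Finset.sum_congr rfl fun y _ => by ring
        rw [Finset.sum_congr rfl h1, Finset.sum_add_distrib, neg_add]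
        congr 1
        · rw [condEntropy_eq μ X Y]
          congr 1
          rw [Finset.sum_comm]
          refine Finset.sum_congr rfl fun x _ => ?_
          rw [Finset.sum_comm]
          refine Finset.sum_congr rfl fun y _ => ?_
          rw [← Finset.sum_mul, ← hPXYsplit x y]
        · rw [Finset.sum_comm]
          rw [← Finset.sum_neg_distrib]
          refine Finset.sum_congr rfl fun x _ => ?_
          rw [Finset.sum_comm]
          rw [← Finset.sum_neg_distrib]
          refine Finset.sum_congr rfl fun y _ => ?_
          rw [← Finset.sum_neg_distrib]
          exact Finset.sum_congr rfl fun v _ => by ring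

end CondGibbs


section RlNonneg

variable {q : ℕ} {p : ℤ → ℝ}

lemma zip_prod_nonneg (hp0 : ∀ k ∈ Keven q, 0 ≤ p k) :
    ∀ (y : List ↥pmOne) (y' : List ↥(Keven q)),
      0 ≤ (List.zipWith (fun (b : ↥pmOne) (k : ↥(Keven q)) => rho p (b : ℤ) (k : ℤ)) y y').prod
  | [], _ => by simp
  | _ :: _, [] => by simp
  | b :: l, k :: l' => by
      rw [List.zipWith_cons_cons, List.prod_cons]
      exact mul_nonneg (rho_nonneg hp0 k.2 (pm_cases b)) (zip_prod_nonneg hp0 l l')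

lemma Rl_nonneg (hp0 : ∀ k ∈ Keven q, 0 ≤ p k) (y : List ↥pmOne) (y' : List ↥(Keven q)) :
    0 ≤ Rl q p y y' := by
  unfold Rl
  split
  · exact zip_prod_nonneg hp0 y y'
  · exact le_refl 0

end RlNonneg


/-- for the binary input symmetric `q`-ary output kernel `W(b,k) = p (k·b)`
(even `q ≥ 2`),
`I(X;Y⁽q⁾) ≥ I(X;Y) − E[|Y|]·[H(p_{−q/2},…,p_{−1},p_1,…,p_{q/2}) + log₂(∑_{k=1}^{q/2}(p_k+p_{−k})²)]`. -/
theorem stmt17 {Ω S : Type*} [Fintype Ω] (μ : FinProb Ω)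
    (q : ℕ) (hq : Even q) (hq2 : 2 ≤ q) (p : ℤ → ℝ)
    (hp0 : ∀ k ∈ Keven q, 0 ≤ p k) (hp1 : ∑ k ∈ Keven q, p k = 1)
    (X : Ω → S) (Y : Ω → List pmOne) (Yq : Ω → List (Keven q))
    (hlen : ∀ ω, (Yq ω).length = (Y ω).length)
    (hcond : ∀ (x : S) (n : ℕ) (y : Fin n → pmOne) (y' : Fin n → Keven q),
      0 < pr μ (fun ω => X ω = x ∧ Y ω = List.ofFn y) →
      pr μ (fun ω => Yq ω = List.ofFn y' ∧ X ω = x ∧ Y ω = List.ofFn y) /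
        pr μ (fun ω => X ω = x ∧ Y ω = List.ofFn y) = ∏ i, p ((y' i : ℤ) * (y i : ℤ))) :
    mutualInfo μ X Yq ≥ mutualInfo μ X Y -
      expLen μ Y * ((-∑ k ∈ Keven q, p k * Real.logb 2 (p k)) +
        Real.logb 2 (∑ k ∈ Finset.Icc (1 : ℤ) ((q / 2 : ℕ) : ℤ), (p k + p (-k)) ^ 2)) := by
  classical
  letI : DecidableEq (List ↥pmOne) := fun a b => Classical.propDecidable (a = b)
  letI : DecidableEq (List ↥(Keven q)) := fun a b => Classical.propDecidable (a = b)
  have hm1 : (1 : ℤ) ∈ Keven q := by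
    rw [mem_Keven]
    have h2 : 1 ≤ q / 2 := by omega
    refine ⟨one_ne_zero, ?_, ?_⟩
    · have h3 : (0:ℤ) ≤ ((q/2:ℕ):ℤ) := Int.natCast_nonneg _
      omega
    · exact_mod_cast h2
  have dK : ↥(Keven q) := ⟨1, hm1⟩
  have dPM : ↥pmOne := ⟨1, by simp [pmOne]⟩
  have hG0 : ∀ (y : List ↥pmOne) (v : List ↥(Keven q)), 0 ≤ Rl q p y v :=
    fun y v => Rl_nonneg hp0 y v
  have hGpos : ∀ (x : S) (y : List ↥pmOne) (v : List ↥(Keven q)),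
      0 < pr μ (fun ω => X ω = x ∧ Y ω = y ∧ Yq ω = v) → 0 < Rl q p y v := by
    intro x y v hv
    obtain ⟨ω, hωp, hE⟩ := exists_pos_of_pr_pos hv
    set n := y.length with hn
    have hlv : v.length = n := by
      rw [hn, ← hE.2.2, ← hE.2.1]
      exact hlen ω
    have hya : List.ofFn (toFn dPM n y) = y := ofFn_toFn dPM hn.symm
    have hvb : List.ofFn (toFn dK n v) = v := ofFn_toFn dK hlv
    have hXY : 0 < pr μ (fun ω => X ω = x ∧ Y ω = List.ofFn (toFn dPM n y)) := by
      rw [hya]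
      exact lt_of_lt_of_le hv (pr_mono' μ fun ω h => ⟨h.1, h.2.1⟩)
    have hc := hcond x n (toFn dPM n y) (toFn dK n v) hXY
    have hnum : 0 < pr μ (fun ω => Yq ω = List.ofFn (toFn dK n v) ∧ X ω = x ∧
        Y ω = List.ofFn (toFn dPM n y)) := by
      rw [hya, hvb]
      exact lt_of_lt_of_le hv (le_of_eq (pr_congr' μ fun ω => by tauto))
    have hprod : 0 < ∏ i, p ((toFn dK n v i).val * (toFn dPM n y i).val) := by
      rw [← hc]
      exact div_pos hnum hXY
    have hfac : ∀ i : Fin n, 0 < p ((toFn dK n v i).val * (toFn dPM n y i).val) := by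
      intro i
      rcases (hp0 _ (mul_mem_Keven (toFn dK n v i).2 (pm_cases (toFn dPM n y i)))).lt_or_eq
        with h | h
      · exact h
      · exfalso
        have h0 : ∏ i, p ((toFn dK n v i).val * (toFn dPM n y i).val) = 0 :=
          Finset.prod_eq_zero (Finset.mem_univ i) h.symm
        rw [h0] at hprod
        exact lt_irrefl 0 hprod
    have hrpos : 0 < ∏ i, rho p ((toFn dPM n y i).val) ((toFn dK n v i).val) :=
      Finset.prod_pos fun i _ =>
        rho_pos hp0 (toFn dK n v i).2 (pm_cases (toFn dPM n y i)) (hfac i)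
    rw [← hya, ← hvb, Rl_ofFn]
    exact hrpos
  have hGsum : ∀ v : List ↥(Keven q), ∑ y ∈ Finset.univ.image Y, Rl q p y v ≤ 1 :=
    fun v => sum_Rl_le_one hq2 hp0 dK dPM _ v
  have hmain := cond_gibbs μ X Y Yq (Rl q p) hG0 hGsum hGpos
  have hxyb : ∀ x ∈ Finset.univ.image X, ∀ y ∈ Finset.univ.image Y,
      ∑ v ∈ (Finset.univ.image Yq).filter (fun v => 0 < pr μ (fun ω => Yq ω = v)),
        pr μ (fun ω => X ω = x ∧ Y ω = y ∧ Yq ω = v) * (-Real.logb 2 (Rl q p y v))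
      ≤ pr μ (fun ω => X ω = x ∧ Y ω = y) * ((y.length : ℝ) * cC q p) := by
    intro x _ y _
    rcases (pr_nonneg' μ (fun ω => X ω = x ∧ Y ω = y)).lt_or_eq with hpos | h0
    · set n := y.length with hn
      have hya : List.ofFn (toFn dPM n y) = y := ofFn_toFn dPM hn.symm
      have hXYof : 0 < pr μ (fun ω => X ω = x ∧ Y ω = List.ofFn (toFn dPM n y)) := by
        rw [hya]; exact hpos
      set gfun : (Fin n → ↥(Keven q)) → ℝ := fun z =>
        (∏ i, p ((z i : ℤ) * (toFn dPM n y i).val)) *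
          (-Real.logb 2 (∏ i, rho p ((toFn dPM n y i).val) ((z i : ℤ)))) with hgfun
      set T := ((Finset.univ.image Yq).filter (fun v => 0 < pr μ (fun ω => Yq ω = v))).filter
        (fun v => 0 < pr μ (fun ω => X ω = x ∧ Y ω = y ∧ Yq ω = v)) with hT
      have hdrop : ∑ v ∈ T,
          pr μ (fun ω => X ω = x ∧ Y ω = y ∧ Yq ω = v) * (-Real.logb 2 (Rl q p y v))
          = ∑ v ∈ (Finset.univ.image Yq).filter (fun v => 0 < pr μ (fun ω => Yq ω = v)),
            pr μ (fun ω => X ω = x ∧ Y ω = y ∧ Yq ω = v) * (-Real.logb 2 (Rl q p y v)) := by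
        apply Finset.sum_filter_of_ne
        intro v _ hne
        by_contra hnp
        have h0' : pr μ (fun ω => X ω = x ∧ Y ω = y ∧ Yq ω = v) = 0 :=
          le_antisymm (not_lt.mp hnp) (pr_nonneg' μ _)
        exact hne (by rw [h0', zero_mul])
      rw [← hdrop]
      have hvlen : ∀ v ∈ T, v.length = n := by
        intro v hvT
        have hPJ : 0 < pr μ (fun ω => X ω = x ∧ Y ω = y ∧ Yq ω = v) :=
          (Finset.mem_filter.mp hvT).2
        obtain ⟨ω, _, hE⟩ := exists_pos_of_pr_pos hPJ
        rw [hn, ← hE.2.2, ← hE.2.1]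
        exact hlen ω
      have hterm : ∀ v ∈ T,
          pr μ (fun ω => X ω = x ∧ Y ω = y ∧ Yq ω = v) * (-Real.logb 2 (Rl q p y v))
          = pr μ (fun ω => X ω = x ∧ Y ω = y) * gfun (toFn dK n v) := by
        intro v hvT
        have hlv : v.length = n := hvlen v hvT
        have hvb : List.ofFn (toFn dK n v) = v := ofFn_toFn dK hlv
        have hc := hcond x n (toFn dPM n y) (toFn dK n v) hXYof
        rw [div_eq_iff (ne_of_gt hXYof)] at hc
        have hPJeq : pr μ (fun ω => X ω = x ∧ Y ω = y ∧ Yq ω = v)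
            = pr μ (fun ω => Yq ω = List.ofFn (toFn dK n v) ∧ X ω = x ∧
                Y ω = List.ofFn (toFn dPM n y)) := by
          rw [hya, hvb]
          exact pr_congr' μ (fun ω => by tauto)
        have hRl := Rl_ofFn (q := q) (p := p) (toFn dPM n y) (toFn dK n v)
        rw [hya, hvb] at hRl
        rw [hPJeq, hc, hya, hRl]
        simp only [hgfun]
        ring
      rw [Finset.sum_congr rfl hterm, ← Finset.mul_sum]
      refine mul_le_mul_of_nonneg_left ?_ hpos.le
      have hinj : ∀ v1 ∈ T, ∀ v2 ∈ T, toFn dK n v1 = toFn dK n v2 → v1 = v2 := by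
        intro v1 h1 v2 h2 he
        rw [← ofFn_toFn dK (hvlen v1 h1), ← ofFn_toFn dK (hvlen v2 h2), he]
      have hgnn : ∀ z : Fin n → ↥(Keven q), 0 ≤ gfun z := by
        intro z
        simp only [hgfun]
        apply mul_nonneg
        · exact Finset.prod_nonneg fun i _ =>
            hp0 _ (mul_mem_Keven (z i).2 (pm_cases (toFn dPM n y i)))
        · rw [neg_nonneg]
          apply Real.logb_nonpos one_lt_two
          · exact Finset.prod_nonneg fun i _ =>
              rho_nonneg hp0 (z i).2 (pm_cases (toFn dPM n y i))
          · exact Finset.prod_le_one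
              (fun i _ => rho_nonneg hp0 (z i).2 (pm_cases (toFn dPM n y i)))
              (fun i _ => rho_le_one hp0 (z i).2 (pm_cases (toFn dPM n y i)))
      calc ∑ v ∈ T, gfun (toFn dK n v)
          = ∑ w ∈ T.image (toFn dK n), gfun w := (Finset.sum_image hinj).symm
        _ ≤ ∑ w : Fin n → ↥(Keven q), gfun w :=
            Finset.sum_le_sum_of_subset_of_nonneg (Finset.subset_univ _)
              (fun w _ _ => hgnn w)
        _ = (n : ℝ) * cC q p := by
            simp only [hgfun]
            exact sum_g hq2 hp0 hp1 (toFn dPM n y)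
    · have hall : ∀ v ∈ (Finset.univ.image Yq).filter
          (fun v => 0 < pr μ (fun ω => Yq ω = v)),
          pr μ (fun ω => X ω = x ∧ Y ω = y ∧ Yq ω = v) * (-Real.logb 2 (Rl q p y v)) = 0 := by
        intro v _
        have h0' : pr μ (fun ω => X ω = x ∧ Y ω = y ∧ Yq ω = v) = 0 :=
          le_antisymm (le_trans (pr_mono' μ fun ω h => ⟨h.1, h.2.1⟩) h0.symm.le)
            (pr_nonneg' μ _)
        rw [h0', zero_mul]
      rw [Finset.sum_congr rfl hall, Finset.sum_const_zero, ← h0, zero_mul]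
  have hPYsplit : ∀ y : List ↥pmOne, pr μ (fun ω => Y ω = y)
      = ∑ x ∈ Finset.univ.image X, pr μ (fun ω => X ω = x ∧ Y ω = y) := by
    intro y
    rw [pr_partition μ (fun ω => Y ω = y) X]
    exact Finset.sum_congr rfl fun x _ => pr_congr' μ (fun ω => by tauto)
  have hexp : ∑ y ∈ Finset.univ.image Y, pr μ (fun ω => Y ω = y) * ((y.length : ℕ) : ℝ)
      = expLen μ Y := by
    unfold pr expLen
    dsimp only
    calc ∑ y ∈ Finset.univ.image Y, (∑ ω, if Y ω = y then μ.p ω else 0) * ((y.length : ℕ) : ℝ)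
        = ∑ y ∈ Finset.univ.image Y, ∑ ω,
            (if Y ω = y then μ.p ω * ((y.length : ℕ) : ℝ) else 0) := by
          refine Finset.sum_congr rfl fun y _ => ?_
          rw [Finset.sum_mul]
          refine Finset.sum_congr rfl fun ω _ => ?_
          by_cases h : Y ω = y <;> simp [h]
      _ = ∑ ω, ∑ y ∈ Finset.univ.image Y,
            (if Y ω = y then μ.p ω * ((y.length : ℕ) : ℝ) else 0) := Finset.sum_comm
      _ = ∑ ω, μ.p ω * (((Y ω).length : ℕ) : ℝ) := by
          refine Finset.sum_congr rfl fun ω _ => ?_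
          rw [Finset.sum_ite_eq]
          rw [if_pos (Finset.mem_image_of_mem Y (Finset.mem_univ ω))]
  have hremainder : ∑ x ∈ Finset.univ.image X, ∑ y ∈ Finset.univ.image Y,
      ∑ v ∈ (Finset.univ.image Yq).filter (fun v => 0 < pr μ (fun ω => Yq ω = v)),
        pr μ (fun ω => X ω = x ∧ Y ω = y ∧ Yq ω = v) * (-Real.logb 2 (Rl q p y v))
      ≤ cC q p * expLen μ Y := by
    refine le_trans (Finset.sum_le_sum fun x hx => Finset.sum_le_sum fun y hy =>
      hxyb x hx y hy) (le_of_eq ?_)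
    calc ∑ x ∈ Finset.univ.image X, ∑ y ∈ Finset.univ.image Y,
          pr μ (fun ω => X ω = x ∧ Y ω = y) * ((y.length : ℝ) * cC q p)
        = ∑ y ∈ Finset.univ.image Y, ∑ x ∈ Finset.univ.image X,
          pr μ (fun ω => X ω = x ∧ Y ω = y) * ((y.length : ℝ) * cC q p) := Finset.sum_comm
      _ = ∑ y ∈ Finset.univ.image Y,
          (pr μ (fun ω => Y ω = y) * ((y.length : ℕ) : ℝ)) * cC q p := by
          refine Finset.sum_congr rfl fun y _ => ?_
          rw [← Finset.sum_mul, ← hPYsplit y]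
          ring
      _ = cC q p * expLen μ Y := by
          rw [← Finset.sum_mul, hexp, mul_comm]
  have hs1 : ∑ k ∈ Finset.Icc (1:ℤ) ((q/2 : ℕ) : ℤ), (p k + p (-k)) = 1 := by
    rw [← sum_Keven_split hq2 p]
    exact hp1
  have hs0 : ∀ k ∈ Finset.Icc (1:ℤ) ((q/2 : ℕ) : ℤ), 0 ≤ p k + p (-k) :=
    fun k hk => s_nonneg hp0 (Icc_subset_Keven hk)
  set A := ∑ k ∈ Finset.Icc (1:ℤ) ((q/2 : ℕ) : ℤ), (p k + p (-k)) ^ 2 with hA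
  have hApos : 0 < A := by
    rcases (Finset.sum_nonneg fun k (_ : k ∈ Finset.Icc (1:ℤ) ((q/2 : ℕ) : ℤ)) =>
      sq_nonneg (p k + p (-k))).lt_or_eq with h | h
    · rw [hA]; exact h
    · exfalso
      have hall := (Finset.sum_eq_zero_iff_of_nonneg
        (fun k _ => sq_nonneg (p k + p (-k)))).mp h.symm
      have hz : ∑ k ∈ Finset.Icc (1:ℤ) ((q/2 : ℕ) : ℤ), (p k + p (-k)) = 0 := by
        apply Finset.sum_eq_zero
        intro k hk
        exact pow_eq_zero_iff (two_ne_zero) |>.mp (hall k hk)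
      rw [hs1] at hz
      norm_num at hz
  have hjensen : ∑ k ∈ Finset.Icc (1:ℤ) ((q/2 : ℕ) : ℤ),
      (p k + p (-k)) * Real.logb 2 (p k + p (-k)) ≤ Real.logb 2 A := by
    have hg := gibbs (Finset.Icc (1:ℤ) ((q/2 : ℕ) : ℤ)) (fun k => p k + p (-k))
      (fun k => (p k + p (-k)) ^ 2 / A) hs0
      (fun k _ => div_nonneg (sq_nonneg _) hApos.le)
      (fun k _ hk => div_pos (pow_pos hk 2) hApos)
      (by rw [← Finset.sum_div, ← hA, div_self (ne_of_gt hApos), hs1])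
    have hrw : ∀ k ∈ Finset.Icc (1:ℤ) ((q/2 : ℕ) : ℤ),
        (p k + p (-k)) * Real.logb 2 ((p k + p (-k)) ^ 2 / A)
        = 2 * ((p k + p (-k)) * Real.logb 2 (p k + p (-k)))
          - Real.logb 2 A * (p k + p (-k)) := by
      intro k hk
      rcases (hs0 k hk).lt_or_eq with hpos | h0
      · rw [Real.logb_div (by positivity) (ne_of_gt hApos), Real.logb_pow]
        ring
      · rw [← h0]
        simp
    rw [Finset.sum_congr rfl hrw, Finset.sum_sub_distrib] at hg
    rw [← Finset.mul_sum, ← Finset.mul_sum, hs1, mul_one] at hg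
    linarith
  have hccle : cC q p ≤ (-∑ k ∈ Keven q, p k * Real.logb 2 (p k)) + Real.logb 2 A := by
    unfold cC
    linarith [hjensen]
  have hexplen0 : 0 ≤ expLen μ Y := by
    unfold expLen
    exact Finset.sum_nonneg fun ω _ => mul_nonneg (μ.nonneg ω) (Nat.cast_nonneg _)
  have hkey : condEntropy μ X Yq ≤ condEntropy μ X Y + cC q p * expLen μ Y := by
    linarith [hmain, hremainder]
  have hfinal : cC q p * expLen μ Y ≤ expLen μ Y *
      ((-∑ k ∈ Keven q, p k * Real.logb 2 (p k)) + Real.logb 2 A) := by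
    rw [mul_comm]
    exact mul_le_mul_of_nonneg_left hccle hexplen0
  unfold mutualInfo
  rw [ge_iff_le]
  linarith [hkey, hfinal]
end
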